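/- Let λ, a ∈ ℝⁿ with ‖λ‖ = ‖a‖ = 1 and d ∈ ℝᵐ with ‖d‖ ≤ 1. Define φ_λ(y) = max{λᵀx : ‖x‖ ≤ ‖y‖, aᵀx + dᵀy ≤ 0}. Then φ_λ(y) = ‖y‖ if λᵀa‖y‖ + dᵀy ≤ 0, and φ_λ(y) = sqrt((‖y‖² − (dᵀy)²)(1 − (λᵀa)²)) − (dᵀy)(λᵀa) otherwise. -/

import Mathlib

open RealInnerProductSpace

set_option maxHeartbeats 1000000


lemma key_cps (c s β R P : ℝ) (hs : 0 ≤ s) (hcs : c^2 + s^2 = 1)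
    (hP : 0 ≤ P) (hP2 : P^2 = R^2 - β^2) (h2 : 0 ≤ c*R + β) (hR : 0 ≤ R) :
    0 ≤ c*P + s*β := by
  have hb2 : β^2 ≤ R^2 := by nlinarith [sq_nonneg P]
  rcases le_or_gt 0 β with hβ | hβ
  · rcases le_or_gt 0 c with hc | hc
    · positivity
    · by_contra hcon
      push_neg at hcon
      have h3 : s*β < (-c)*P := by linarith
      have h4 : (s*β)^2 < ((-c)*P)^2 :=
        pow_lt_pow_left₀ h3 (mul_nonneg hs hβ) (by norm_num)
      have h5 : ((-c)*R)^2 ≤ β^2 :=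
        pow_le_pow_left₀ (mul_nonneg (by linarith) hR) (by linarith) 2
      nlinarith [h4, h5]
  · by_contra hcon
    push_neg at hcon
    have hR0 : 0 < R := by nlinarith
    have hc : 0 < c := by nlinarith
    have h3 : c*P < s*(-β) := by linarith
    have h4 : (c*P)^2 < (s*(-β))^2 :=
      pow_lt_pow_left₀ h3 (mul_nonneg hc.le hP) (by norm_num)
    have h5 : (-β)^2 ≤ (c*R)^2 :=
      pow_le_pow_left₀ (by linarith) (by linarith) 2
    nlinarith [h4, h5]

lemma key_ineq (c s β u R A P : ℝ) (hs : 0 ≤ s) (hcs : c^2 + s^2 = 1)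
    (hA : 0 ≤ A) (hA2 : A^2 = R^2 - u^2) (hP : 0 ≤ P) (hP2 : P^2 = R^2 - β^2)
    (hu : u ≤ -β) (h2 : 0 ≤ c*R + β) (hR : 0 ≤ R) :
    c*u + s*A ≤ s*P - c*β := by
  have hu2 : u^2 ≤ R^2 := by nlinarith [sq_nonneg A]
  have hb2 : β^2 ≤ R^2 := by nlinarith [sq_nonneg P]
  have hcPsb := key_cps c s β R P hs hcs hP hP2 h2 hR
  rcases lt_or_eq_of_le hP with hPpos | hP0
  · have hX : 0 ≤ R^2 + β*u := by nlinarith [sq_nonneg (β+u), sq_nonneg (β-u)]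
    have h1 : (A*P)^2 ≤ (R^2+β*u)^2 := by nlinarith [sq_nonneg (R*(u+β))]
    have hAP : A*P ≤ R^2 + β*u := by nlinarith [mul_nonneg hA hP, h1, hX]
    have hprod : (c*P + s*β) * (u + β) ≤ 0 :=
      mul_nonpos_of_nonneg_of_nonpos hcPsb (by linarith)
    have hsAP : s*(A*P) ≤ s*(R^2 + β*u) := mul_le_mul_of_nonneg_left hAP hs
    have hmain : P * (c*u + s*A) ≤ P * (s*P - c*β) := by nlinarith [hprod, hsAP]
    exact le_of_mul_le_mul_left hmain hPpos
  · have hP0' : P = 0 := hP0.symm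
    have hbR : β^2 = R^2 := by nlinarith
    rcases le_or_gt 0 β with hβ | hβ
    · have hβR : β = R := by nlinarith
      have huR : u = -R := by nlinarith
      have hA0 : A = 0 := by nlinarith [sq_nonneg A]
      calc c*u + s*A = -(c*R) := by rw [huR, hA0]; ring
        _ = s*P - c*β := by rw [hP0', hβR]; ring
        _ ≤ s*P - c*β := le_refl _
    · have hβR : β = -R := by nlinarith
      have hcRR : R ≤ c*R := by rw [hβR] at h2; linarith
      have hle : c*u + s*A ≤ R := by
        nlinarith [sq_nonneg (c*A - s*u), sq_nonneg (c*u + s*A - R), sq_nonneg (c*u + s*A + R)]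
      calc c*u + s*A ≤ R := hle
        _ ≤ c*R := hcRR
        _ = s*P - c*β := by rw [hP0', hβR]; ring

theorem phi_closed_form {n m : ℕ}
    (lam a : EuclideanSpace ℝ (Fin n)) (d : EuclideanSpace ℝ (Fin m))
    (hlam : ‖lam‖ = 1) (ha : ‖a‖ = 1) (hd : ‖d‖ ≤ 1)
    (y : EuclideanSpace ℝ (Fin m)) :
    IsGreatest {r : ℝ | ∃ x : EuclideanSpace ℝ (Fin n),
        ‖x‖ ≤ ‖y‖ ∧ ⟪a, x⟫ + ⟪d, y⟫ ≤ 0 ∧ r = ⟪lam, x⟫}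
      (if ⟪lam, a⟫ * ‖y‖ + ⟪d, y⟫ ≤ 0 then ‖y‖
       else Real.sqrt ((‖y‖ ^ 2 - ⟪d, y⟫ ^ 2) * (1 - ⟪lam, a⟫ ^ 2)) - ⟪d, y⟫ * ⟪lam, a⟫) := by
  set c : ℝ := ⟪lam, a⟫ with hcdef
  set β : ℝ := ⟪d, y⟫ with hβdef
  set R : ℝ := ‖y‖ with hRdef
  have hR0 : (0:ℝ) ≤ R := norm_nonneg y
  have hll : ⟪lam, lam⟫ = (1:ℝ) := by
    rw [real_inner_self_eq_norm_sq, hlam]; norm_num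
  have haa : ⟪a, a⟫ = (1:ℝ) := by
    rw [real_inner_self_eq_norm_sq, ha]; norm_num
  have hal : ⟪a, lam⟫ = c := by rw [hcdef, real_inner_comm]
  have hb : |β| ≤ R := by
    calc |β| ≤ ‖d‖ * ‖y‖ := abs_real_inner_le_norm d y
      _ ≤ 1 * R := mul_le_mul_of_nonneg_right hd hR0
      _ = R := one_mul R
  have hb2 : β^2 ≤ R^2 := by
    have := abs_le.mp hb
    nlinarith [this.1, this.2]
  have hcabs : |c| ≤ 1 := by
    have h := abs_real_inner_le_norm lam a
    rw [hlam, ha] at h; simpa using h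
  have hc2 : c^2 ≤ 1 := by
    have := abs_le.mp hcabs
    nlinarith [this.1, this.2]
  set s : ℝ := Real.sqrt (1 - c^2) with hsdef
  set P : ℝ := Real.sqrt (R^2 - β^2) with hPdef
  have hs0 : 0 ≤ s := Real.sqrt_nonneg _
  have hP0 : 0 ≤ P := Real.sqrt_nonneg _
  have hs2 : s^2 = 1 - c^2 := Real.sq_sqrt (by linarith)
  have hP2 : P^2 = R^2 - β^2 := Real.sq_sqrt (by linarith)
  have hsqrtPs : Real.sqrt ((R^2 - β^2) * (1 - c^2)) = P * s := by
    rw [Real.sqrt_mul (by linarith)]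
  have hwsq : ‖lam - c • a‖^2 = 1 - c^2 := by
    rw [norm_sub_sq_real, real_inner_smul_right, norm_smul, ha, mul_one, hlam,
      Real.norm_eq_abs, sq_abs, ← hcdef]
    ring
  have hwnorm : ‖lam - c • a‖ = s := by
    rw [hsdef, ← hwsq, Real.sqrt_sq (norm_nonneg _)]
  constructor
  · -- membership
    show (if c * R + β ≤ 0 then R
       else Real.sqrt ((R ^ 2 - β ^ 2) * (1 - c ^ 2)) - β * c) ∈ _
    split_ifs with h
    · refine ⟨R • lam, ?_, ?_, ?_⟩
      · rw [norm_smul, hlam]; simp [abs_of_nonneg hR0]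
      · rw [real_inner_smul_right, hal]; linarith [h]
      · rw [real_inner_smul_right, hll]; ring
    · push_neg at h
      by_cases hs : s = 0
      · have hc1 : 1 - c^2 = 0 := by
          have h1 : 1 - c^2 ≤ 0 := Real.sqrt_eq_zero'.mp (hsdef ▸ hs)
          linarith
        refine ⟨(-β) • a, ?_, ?_, ?_⟩
        · rw [norm_smul, ha]; simpa [abs_neg] using hb
        · rw [real_inner_smul_right, haa]; ring_nf; norm_num
        · rw [real_inner_smul_right, ← hcdef, hc1, mul_zero, Real.sqrt_zero]; ring
      · refine ⟨(-β) • a + (P/s) • (lam - c • a), ?_, ?_, ?_⟩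
        · have horth : ⟪(-β) • a, (P/s) • (lam - c • a)⟫ = (0:ℝ) := by
            rw [real_inner_smul_left, real_inner_smul_right, inner_sub_right,
              real_inner_smul_right, haa, hal]
            ring
          have hPs : |P/s| * s = P := by
            rw [abs_of_nonneg (div_nonneg hP0 hs0), div_mul_cancel₀ _ hs]
          have hnsq : ‖(-β) • a + (P/s) • (lam - c • a)‖^2 = R^2 := by
            rw [norm_add_sq_real, horth, norm_smul, norm_smul, ha, hwnorm, mul_one,
              Real.norm_eq_abs, Real.norm_eq_abs, hPs, abs_neg, sq_abs, hP2]
            ring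
          have : ‖(-β) • a + (P/s) • (lam - c • a)‖ = R := by
            rw [← Real.sqrt_sq (norm_nonneg _), hnsq, Real.sqrt_sq hR0]
          exact le_of_eq this
        · rw [inner_add_right, real_inner_smul_right, real_inner_smul_right,
            inner_sub_right, real_inner_smul_right, haa, hal]
          ring_nf
          norm_num
        · rw [inner_add_right, real_inner_smul_right, real_inner_smul_right,
            inner_sub_right, real_inner_smul_right, hll, ← hcdef, hsqrtPs]
          have hfrac : (P/s) * (1 - c*c) = P * s := by
            have : 1 - c*c = s^2 := by rw [hs2]; ring
            rw [this]; field_simp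
          calc P * s - β * c = -β * c + (P/s) * (1 - c*c) := by rw [hfrac]; ring
            _ = -β * c + P / s * (1 - c * c) := by ring
  · -- upper bound
    rintro r ⟨x, hxn, hcon, rfl⟩
    show _ ≤ if c * R + β ≤ 0 then R
       else Real.sqrt ((R ^ 2 - β ^ 2) * (1 - c ^ 2)) - β * c
    split_ifs with h
    · calc ⟪lam, x⟫ ≤ ‖lam‖ * ‖x‖ := real_inner_le_norm _ _
        _ = ‖x‖ := by rw [hlam, one_mul]
        _ ≤ R := hxn
    · push_neg at h
      set u : ℝ := ⟪a, x⟫ with hudef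
      have hu : u ≤ -β := by linarith
      have hux : |u| ≤ ‖x‖ := by
        have hh := abs_real_inner_le_norm a x
        rw [ha, one_mul] at hh; exact hh
      have hxR2 : ‖x‖^2 ≤ R^2 := pow_le_pow_left₀ (norm_nonneg x) hxn 2
      have hu2 : u^2 ≤ R^2 := by
        have h1 : |u|^2 ≤ ‖x‖^2 := pow_le_pow_left₀ (abs_nonneg _) hux 2
        rw [sq_abs] at h1
        linarith
      set A : ℝ := Real.sqrt (R^2 - u^2) with hAdef
      have hA0 : 0 ≤ A := Real.sqrt_nonneg _
      have hA2 : A^2 = R^2 - u^2 := Real.sq_sqrt (by linarith)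
      have hdecomp : ⟪lam, x⟫ = c * u + ⟪lam - c • a, x - u • a⟫ := by
        rw [inner_sub_left, inner_sub_right, inner_sub_right, real_inner_smul_left,
          real_inner_smul_right, real_inner_smul_right, real_inner_smul_left,
          haa, ← hcdef, ← hudef]
        ring
      have hxa : ⟪x, a⟫ = u := by rw [real_inner_comm]
      have hxu : ‖x - u • a‖^2 = ‖x‖^2 - u^2 := by
        rw [norm_sub_sq_real, real_inner_smul_right, norm_smul, ha, mul_one,
          Real.norm_eq_abs, sq_abs, hxa]
        ring
      have ht : ⟪lam - c • a, x - u • a⟫ ≤ s * A := by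
        calc ⟪lam - c • a, x - u • a⟫ ≤ ‖lam - c • a‖ * ‖x - u • a‖ := real_inner_le_norm _ _
          _ = s * ‖x - u • a‖ := by rw [hwnorm]
          _ ≤ s * A := by
            apply mul_le_mul_of_nonneg_left _ hs0
            rw [hAdef, ← Real.sqrt_sq (norm_nonneg (x - u • a)), hxu]
            apply Real.sqrt_le_sqrt
            linarith
      have hkey := key_ineq c s β u R A P hs0 (by rw [hs2]; ring) hA0 hA2 hP0 hP2 hu (le_of_lt h) hR0
      rw [hsqrtPs]
      calc ⟪lam, x⟫ = c * u + ⟪lam - c • a, x - u • a⟫ := hdecomp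
        _ ≤ c * u + s * A := by linarith
        _ ≤ s * P - c * β := hkey
        _ = P * s - β * c := by ring
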